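/- Let 2 ≤ k ≤ r, let m ≥ 1 be an integer dividing n, and identify Ω_n with {0, 1, ..., n−1} in clockwise cyclic order. Let H' be a cg r-graph on Ω_n such that no edge of H' has (k,m)-gaps and the sum of the elements of every edge of H' is divisible by m. Then H' contains no crossing k-path P_k^r. -/

import Mathlib

/-- `CycChain ℓ w` says that starting at `w 0` and moving clockwise around the cyclically
ordered set `Fin n` (clockwise = increasing residues), one encounters
`w 1, w 2, ..., w (ℓ-1)` in this order, i.e. `w 0 < w 1 < ... < w (ℓ-1) (< w 0)`
in the cyclic order. -/
def CycChain {n : ℕ} (ℓ : ℕ) (w : ℕ → Fin n) : Prop :=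
  ∀ i j : ℕ, i < j → j < ℓ → w i - w 0 < w j - w 0

/-- `IsCycCrossPath r k H v` says that `v 0, v 1, ..., v (k+r-2)` are distinct vertices forming
an `r`-uniform crossing `k`-path in the convex geometric `r`-graph `H` on the cyclically ordered
vertex set `Fin n`: the edges are `{v i, ..., v (i+r-1)}` for `0 ≤ i ≤ k-1`, and in the cyclic
order:
(i) `v 0 < v 1 < ... < v (r-1)`;
(ii) for each `j < r-1`, `v j < v (j+r) < v (j+2r) < ... < v (j+1)`, the chain running over all
indices `j + i*r ≤ k+r-2`;
(iii) `v 0 < v (r-1) < v (2r-1) < ... < v (⌊(r+k-2)/r⌋*r - 1)`. -/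
def IsCycCrossPath (r k : ℕ) {n : ℕ} (H : Finset (Finset (Fin n))) (v : ℕ → Fin n) : Prop :=
  (∀ i j : ℕ, i < k + r - 1 → j < k + r - 1 → v i = v j → i = j) ∧
  (∀ i : ℕ, i < k → Finset.image v (Finset.Ico i (i + r)) ∈ H) ∧
  CycChain r v ∧
  (∀ j : ℕ, j + 1 < r →
    CycChain ((k + r - 2 - j) / r + 2)
      (fun i => if i = 0 then v j
                else if i ≤ (k + r - 2 - j) / r then v (j + i * r) else v (j + 1))) ∧
  CycChain ((k + r - 2) / r + 1) (fun i => if i = 0 then v 0 else v (i * r - 1))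

/-- `exCycP n r k` is the maximum number of edges in an `n`-vertex convex geometric `r`-graph
containing no crossing `k`-path `P_k^r`. -/
noncomputable def exCycP (n r k : ℕ) : ℕ :=
  sSup {m | ∃ H : Finset (Finset (Fin n)),
    (∀ e ∈ H, e.card = r) ∧ (¬ ∃ v : ℕ → Fin n, IsCycCrossPath r k H v) ∧ H.card = m}

/-- `NextIn R u u'` says that `u'` is the clockwise-next element of `R` after `u`:
both belong to `R`, they are distinct, and every other element of `R` is at clockwise
distance from `u` at least that of `u'`. -/
def NextIn {n : ℕ} (R : Finset (Fin n)) (u u' : Fin n) : Prop :=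
  u ∈ R ∧ u' ∈ R ∧ u' ≠ u ∧ ∀ x ∈ R, x ≠ u → u' - u ≤ x - u

/-- `HasGaps k m R` says that `R` has `(k,m)`-gaps: some `k-1` cyclically consecutive gaps of
`R` (the gaps between `k` cyclically consecutive elements `u 0, u 1, ..., u (k-1)` of `R`)
each contain at least `m` vertices of `Fin n` (the gap between consecutive elements
`u i` and `u (i+1)` contains `(u (i+1) - u i) - 1` vertices). -/
def HasGaps {n : ℕ} (k m : ℕ) (R : Finset (Fin n)) : Prop :=
  ∃ u : ℕ → Fin n, ∀ i : ℕ, i < k - 1 →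
    NextIn R (u i) (u (i + 1)) ∧ m + 1 ≤ ((u (i + 1) - u i : Fin n) : ℕ)

lemma finSubVal {n : ℕ} (x y : Fin n) : ((x - y : Fin n) : ℕ) = (x.val + n - y.val) % n := by
  rw [Fin.sub_def]; show (n - y.val + x.val) % n = _; congr 1; omega

lemma finSubValLe {n : ℕ} (x y : Fin n) (h : y.val ≤ x.val) :
    ((x - y : Fin n) : ℕ) = x.val - y.val := by
  rw [finSubVal]
  have hx := x.isLt; have hy := y.isLt
  have : x.val + n - y.val = (x.val - y.val) + n := by omega
  rw [this, Nat.add_mod_right, Nat.mod_eq_of_lt (by omega)]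

lemma finSubValLt {n : ℕ} (x y : Fin n) (h : x.val < y.val) :
    ((x - y : Fin n) : ℕ) = n + x.val - y.val := by
  rw [finSubVal]
  have hx := x.isLt; have hy := y.isLt
  rw [Nat.mod_eq_of_lt (by omega)]; omega

lemma finSubBase {n : ℕ} (hn : 0 < n) (a b base : Fin n) : a - b = (a - base) - (b - base) := by
  haveI : NeZero n := ⟨hn.ne'⟩
  exact (sub_sub_sub_cancel_right a b base).symm

/-- Let `2 ≤ k ≤ r`, let `m ≥ 1` divide `n`, and let `H'` be a cg `r`-graph
on `Fin n = {0, 1, ..., n−1}` such that no edge of `H'` has `(k,m)`-gaps and the sum of the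
elements of every edge is divisible by `m`. Then `H'` contains no crossing `k`-path. -/
theorem stmt12 (n r k m : ℕ) (hk : 2 ≤ k) (hkr : k ≤ r) (hm : 1 ≤ m) (hmn : m ∣ n)
    (H' : Finset (Finset (Fin n)))
    (hH : ∀ e ∈ H', e.card = r ∧ ¬ HasGaps k m e ∧ m ∣ ∑ x ∈ e, (x : ℕ)) :
    ¬ ∃ v : ℕ → Fin n, IsCycCrossPath r k H' v := by
  rintro ⟨v, hinj, hedge, hchain, hii, -⟩
  have hn : 0 < n := (v 0).pos
  set D : ℕ → ℕ := fun a => ((v a - v 0 : Fin n) : ℕ) with hDdef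
  have hmono : ∀ a b : ℕ, a < b → b < r → D a < D b := fun a b hab hbr => hchain a b hab hbr
  have hDlt : ∀ a : ℕ, D a < n := fun a => (v a - v 0).isLt
  have hsub_lt : ∀ a b : ℕ, D a ≤ D b → ((v b - v a : Fin n) : ℕ) = D b - D a := by
    intro a b h
    rw [finSubBase hn (v b) (v a) (v 0)]
    exact finSubValLe _ _ h
  have hsub_gt : ∀ a b : ℕ, D b < D a → ((v b - v a : Fin n) : ℕ) = n + D b - D a := by
    intro a b h
    rw [finSubBase hn (v b) (v a) (v 0)]
    exact finSubValLt _ _ h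
  have he0 : Finset.image v (Finset.Ico 0 (0 + r)) ∈ H' := hedge 0 (by omega)
  obtain ⟨-, hnogap, -⟩ := hH _ he0
  apply hnogap
  refine ⟨v, fun i hik => ?_⟩
  have hi2 : i + 1 < r := by omega
  have hmemi : v i ∈ Finset.image v (Finset.Ico 0 (0 + r)) :=
    Finset.mem_image_of_mem v (by simp [Finset.mem_Ico]; omega)
  have hmemi1 : v (i + 1) ∈ Finset.image v (Finset.Ico 0 (0 + r)) :=
    Finset.mem_image_of_mem v (by simp [Finset.mem_Ico]; omega)
  have hne : v (i + 1) ≠ v i := by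
    intro h
    have := hinj _ _ (by omega) (by omega) h
    omega
  -- the crossing condition: v (i+r) lies strictly between v i and v (i+1)
  have hq : (k + r - 2 - i) / r = 1 := Nat.div_eq_of_lt_le (by omega) (by omega)
  have hch := hii i hi2
  rw [hq] at hch
  have h01 := hch 0 1 (by omega) (by omega)
  have h12 := hch 1 2 (by omega) (by omega)
  simp only [if_pos rfl] at h01 h12
  norm_num at h01 h12
  rw [Fin.lt_def] at h01 h12
  -- divisibility: v (i+r) ≡ v i (mod m)
  have hsum1 := (hH _ (hedge i (by omega))).2.2
  have hsum2 := (hH _ (hedge (i + 1) (by omega))).2.2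
  have hinjIco : ∀ N : ℕ, N + r ≤ k + r - 1 → ∀ x ∈ Finset.Ico N (N + r), ∀ y ∈ Finset.Ico N (N + r),
      v x = v y → x = y := by
    intro N hN x hx y hy hxy
    simp [Finset.mem_Ico] at hx hy
    exact hinj x y (by omega) (by omega) hxy
  rw [Finset.sum_image (hinjIco i (by omega))] at hsum1
  rw [Finset.sum_image (hinjIco (i + 1) (by omega))] at hsum2
  have hsplit1 : ∑ j ∈ Finset.Ico i (i + r), ((v j : ℕ))
      = (v i : ℕ) + ∑ j ∈ Finset.Ico (i + 1) (i + r), ((v j : ℕ)) :=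
    Finset.sum_eq_sum_Ico_succ_bot (by omega) _
  have hir : i + 1 + r = (i + r) + 1 := by omega
  rw [hir] at hsum2
  have hsplit2 : ∑ j ∈ Finset.Ico (i + 1) ((i + r) + 1), ((v j : ℕ))
      = ∑ j ∈ Finset.Ico (i + 1) (i + r), ((v j : ℕ)) + (v (i + r) : ℕ) :=
    Finset.sum_Ico_succ_top (by omega) _
  rw [hsplit1] at hsum1
  rw [hsplit2] at hsum2
  set S := ∑ j ∈ Finset.Ico (i + 1) (i + r), ((v j : ℕ)) with hS
  have hBn : (v i : ℕ) < n := (v i).isLt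
  have hdvd : m ∣ ((v (i + r) : ℕ) + n - (v i : ℕ)) := by
    have h1 : m ∣ (S + (v (i + r) : ℕ) + n) := Dvd.dvd.add hsum2 hmn
    have h2 := Nat.dvd_sub h1 hsum1
    have heq : S + (v (i + r) : ℕ) + n - ((v i : ℕ) + S) = (v (i + r) : ℕ) + n - (v i : ℕ) := by
      omega
    rwa [heq] at h2
  have hgval : ((v (i + r) - v i : Fin n) : ℕ) = ((v (i + r) : ℕ) + n - (v i : ℕ)) % n :=
    finSubVal _ _
  have hdvdg : m ∣ ((v (i + r) - v i : Fin n) : ℕ) := by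
    rw [hgval]
    exact (Nat.dvd_mod_iff hmn).mpr hdvd
  have hpos : 0 < ((v (i + r) - v i : Fin n) : ℕ) := by
    have : ((v i - v i : Fin n) : ℕ) = 0 := by
      rw [finSubValLe _ _ (le_refl _)]; omega
    omega
  have hmle : m ≤ ((v (i + r) - v i : Fin n) : ℕ) := Nat.le_of_dvd hpos hdvdg
  have hgap : m + 1 ≤ ((v (i + 1) - v i : Fin n) : ℕ) := by omega
  refine ⟨⟨hmemi, hmemi1, hne, ?_⟩, hgap⟩
  -- minimality: v (i+1) is the clockwise-next element of the edge after v i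
  intro x hx hxne
  obtain ⟨j, hj, rfl⟩ := Finset.mem_image.mp hx
  simp [Finset.mem_Ico] at hj
  have hji : j ≠ i := by rintro rfl; exact hxne rfl
  rw [Fin.le_def]
  have hDi1 : D i < D (i + 1) := hmono i (i + 1) (by omega) hi2
  rw [hsub_lt i (i + 1) (le_of_lt hDi1)]
  rcases lt_or_gt_of_ne hji with hlt | hgt
  · -- j < i
    have hDj : D j < D i := hmono j i hlt (by omega)
    rw [hsub_gt i j hDj]
    have := hDlt (i + 1)
    omega
  · -- i < j
    have hDj : D (i + 1) ≤ D j := by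
      rcases (by omega : i + 1 = j ∨ i + 1 < j) with h | h
      · rw [h]
      · exact le_of_lt (hmono (i + 1) j h hj)
    rw [hsub_lt i j (by omega)]
    omega
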